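/- Kernel change-of-variables asymptotic (constant A₁): as h → 0⁺, h^{-d} ∫_{B̄(0,r)} K((φ(z) − x)/h) f(z) dz converges to f(0) · ∫_{ℝ^d} K(L u) du. -/

import Mathlib

open MeasureTheory Metric Filter

/-- Kernel change-of-variables asymptotic (constant A₁): as `h → 0⁺`,
`h^(-d) ∫_{B̄(0,r)} K((φ z − x)/h) f z dz → f 0 · ∫_{ℝ^d} K (L u) du`. -/
theorem kernel_change_of_variables_A1
    (d D : ℕ) (hd : 0 < d) (hdD : d ≤ D) (r : ℝ) (hr : 0 < r)
    (φ : EuclideanSpace ℝ (Fin d) → EuclideanSpace ℝ (Fin D))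
    (hφ : ContDiff ℝ 1 φ)
    (c C : ℝ) (hc : 0 < c) (hcC : c ≤ C)
    (hbil : ∀ z ∈ closedBall (0 : EuclideanSpace ℝ (Fin d)) r,
      ∀ z' ∈ closedBall (0 : EuclideanSpace ℝ (Fin d)) r,
        c * ‖z - z'‖ ≤ ‖φ z - φ z'‖ ∧ ‖φ z - φ z'‖ ≤ C * ‖z - z'‖)
    (hL : Function.Injective (fderiv ℝ φ 0))
    (f : EuclideanSpace ℝ (Fin d) → ℝ)
    (hf_meas : Measurable f)
    (hf_nonneg : ∀ z, 0 ≤ f z)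
    (hf_supp : ∀ z ∉ closedBall (0 : EuclideanSpace ℝ (Fin d)) r, f z = 0)
    (hf_bdd : ∃ M : ℝ, ∀ z, f z ≤ M)
    (hf_prob : ∫ z, f z = 1)
    (hf_cont : ContinuousAt f 0) (hf_pos : 0 < f 0)
    (K : EuclideanSpace ℝ (Fin D) → ℝ)
    (hK_nonneg : ∀ u, 0 ≤ K u) (hK_cont : Continuous K)
    (hK_supp : HasCompactSupport K) :
    Tendsto
      (fun h : ℝ =>
        (∫ z in closedBall (0 : EuclideanSpace ℝ (Fin d)) r,
            K (h⁻¹ • (φ z - φ 0)) * f z) / h ^ d)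
      (nhdsWithin 0 (Set.Ioi 0))
      (nhds (f 0 * ∫ u, K (fderiv ℝ φ 0 u))) := by
  obtain ⟨M, hM⟩ := hf_bdd
  have hM0 : 0 ≤ M := le_trans (hf_nonneg 0) (hM 0)
  obtain ⟨κ, hκ⟩ := hK_supp.exists_bound_of_continuous hK_cont
  have hκ' : ∀ v, K v ≤ κ := fun v => le_trans (le_abs_self _) (by simpa using hκ v)
  have hκ0 : 0 ≤ κ := le_trans (hK_nonneg 0) (hκ' 0)
  obtain ⟨R, hR0, hR⟩ := hK_supp.isBounded.subset_closedBall_lt 0 0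
  set L := fderiv ℝ φ 0 with hLdef
  have hφd : HasFDerivAt φ L 0 := (hφ.differentiable one_ne_zero 0).hasFDerivAt
  set R' : ℝ := R / c + 1 with hR'def
  set g : ℝ → EuclideanSpace ℝ (Fin d) → ℝ := fun h u =>
    Set.indicator (closedBall 0 r) (fun z => K (h⁻¹ • (φ z - φ 0)) * f z) (h • u) with hgdef
  -- Step 1: change of variables
  have key : ∀ h ∈ Set.Ioi (0 : ℝ),
      (∫ z in closedBall (0 : EuclideanSpace ℝ (Fin d)) r,
          K (h⁻¹ • (φ z - φ 0)) * f z) / h ^ d = ∫ u, g h u := by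
    intro h hh
    have hpos : (0 : ℝ) < h := hh
    have hcs := MeasureTheory.Measure.integral_comp_smul (μ := volume)
        (Set.indicator (closedBall (0 : EuclideanSpace ℝ (Fin d)) r)
          (fun z => K (h⁻¹ • (φ z - φ 0)) * f z)) h
    rw [finrank_euclideanSpace_fin] at hcs
    have habs : |(h ^ d)⁻¹| = (h ^ d)⁻¹ := abs_of_pos (by positivity)
    calc (∫ z in closedBall (0 : EuclideanSpace ℝ (Fin d)) r,
          K (h⁻¹ • (φ z - φ 0)) * f z) / h ^ d
        = (h ^ d)⁻¹ * (∫ z, Set.indicator (closedBall (0 : EuclideanSpace ℝ (Fin d)) r)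
            (fun z => K (h⁻¹ • (φ z - φ 0)) * f z) z) := by
          rw [integral_indicator measurableSet_closedBall, inv_mul_eq_div]
      _ = ∫ u, g h u := by
          rw [hgdef]; rw [hcs, habs, smul_eq_mul]
  -- Step 2: dominated convergence
  have hmain : Tendsto (fun h => ∫ u, g h u) (nhdsWithin 0 (Set.Ioi 0))
      (nhds (∫ u, K (L u) * f 0)) := by
    have hgm : ∀ h : ℝ, Measurable fun z : EuclideanSpace ℝ (Fin d) =>
        K (h⁻¹ • (φ z - φ 0)) * f z := fun h =>
      ((hK_cont.comp ((hφ.continuous.sub continuous_const :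
          Continuous fun z => φ z - φ 0).const_smul h⁻¹ : Continuous fun z => h⁻¹ • (φ z - φ 0)) :
        Continuous fun z => K (h⁻¹ • (φ z - φ 0))).measurable).mul
        hf_meas
    apply tendsto_integral_filter_of_dominated_convergence
      (bound := Set.indicator (closedBall (0 : EuclideanSpace ℝ (Fin d)) R') (fun _ => κ * M))
    · filter_upwards with h
      exact (((hgm h).indicator measurableSet_closedBall).comp
        (measurable_const_smul h)).aestronglyMeasurable
    · -- bound
      filter_upwards [self_mem_nhdsWithin] with h hh
      have hpos : (0 : ℝ) < h := hh
      filter_upwards with u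
      have hbnd0 : (0 : ℝ) ≤ κ * M := mul_nonneg hκ0 hM0
      by_cases hmem : h • u ∈ closedBall (0 : EuclideanSpace ℝ (Fin d)) r
      · rw [hgdef]
        simp only [Set.indicator_of_mem hmem]
        by_cases hu : u ∈ closedBall (0 : EuclideanSpace ℝ (Fin d)) R'
        · rw [Set.indicator_of_mem hu]
          rw [Real.norm_eq_abs, abs_of_nonneg (mul_nonneg (hK_nonneg _) (hf_nonneg _))]
          exact mul_le_mul (hκ' _) (hM _) (hf_nonneg _) hκ0
        · have hnu : R' < ‖u‖ := by
            simpa [mem_closedBall_zero_iff] using hu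
          have hKz : K (h⁻¹ • (φ (h • u) - φ 0)) = 0 := by
            apply image_eq_zero_of_notMem_tsupport
            intro hmem'
            have h1 : ‖h⁻¹ • (φ (h • u) - φ 0)‖ ≤ R := by
              have := hR hmem'
              simpa [mem_closedBall_zero_iff] using this
            have h2 : c * ‖h • u - 0‖ ≤ ‖φ (h • u) - φ 0‖ :=
              (hbil (h • u) hmem 0 (mem_closedBall_self hr.le)).1
            have h3 : ‖h⁻¹ • (φ (h • u) - φ 0)‖ = h⁻¹ * ‖φ (h • u) - φ 0‖ := by
              rw [norm_smul, Real.norm_eq_abs, abs_of_pos (by positivity)]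
            have h4 : ‖h • u - 0‖ = h * ‖u‖ := by
              rw [sub_zero, norm_smul, Real.norm_eq_abs, abs_of_pos hpos]
            have h5 : c * ‖u‖ ≤ R := by
              have := h1
              rw [h3] at this
              calc c * ‖u‖ = h⁻¹ * (c * (h * ‖u‖)) := by field_simp
                _ ≤ h⁻¹ * ‖φ (h • u) - φ 0‖ := by
                    apply mul_le_mul_of_nonneg_left _ (by positivity)
                    rw [← h4]; exact h2
                _ ≤ R := this
            have h6 : R < c * ‖u‖ := by
              have : R / c < ‖u‖ := lt_trans (by linarith) hnu
              calc R = c * (R / c) := by field_simp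
                _ < c * ‖u‖ := by exact mul_lt_mul_of_pos_left this hc
            linarith
          rw [hKz, zero_mul, norm_zero]
          exact Set.indicator_nonneg (fun _ _ => hbnd0) u
      · rw [hgdef]
        simp only [Set.indicator_of_notMem hmem, norm_zero]
        exact Set.indicator_nonneg (fun _ _ => hbnd0) u
    · exact (integrable_indicator_iff measurableSet_closedBall).mpr
        ((integrableOn_const_iff).mpr (Or.inr measure_closedBall_lt_top))
    · -- pointwise convergence
      filter_upwards with u
      have h1 : Tendsto (fun h : ℝ => h • u) (nhdsWithin 0 (Set.Ioi 0)) (nhds 0) := by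
        have h1' : Tendsto (fun h : ℝ => h • u) (nhds 0) (nhds ((0 : ℝ) • u)) :=
          ((continuous_id.smul (continuous_const : Continuous fun _ : ℝ => u)).tendsto 0)
        rw [zero_smul] at h1'
        exact h1'.mono_left nhdsWithin_le_nhds
      have hc' : Tendsto (fun h : ℝ => ‖h⁻¹‖) (nhdsWithin 0 (Set.Ioi 0)) atTop := by
        refine Tendsto.congr' ?_ tendsto_inv_nhdsGT_zero
        filter_upwards [self_mem_nhdsWithin] with h hh
        exact (Real.norm_of_nonneg (inv_nonneg.mpr (le_of_lt hh))).symm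
      have h2 : Tendsto (fun h : ℝ => h⁻¹ • (φ (h • u) - φ 0)) (nhdsWithin 0 (Set.Ioi 0))
          (nhds (L u)) := by
        have := hφd.lim u hc'
        simpa using this
      have h3 : Tendsto (fun h : ℝ => f (h • u)) (nhdsWithin 0 (Set.Ioi 0)) (nhds (f 0)) :=
        hf_cont.tendsto.comp h1
      have h4 : Tendsto (fun h : ℝ => K (h⁻¹ • (φ (h • u) - φ 0)) * f (h • u))
          (nhdsWithin 0 (Set.Ioi 0)) (nhds (K (L u) * f 0)) :=
        ((hK_cont.tendsto _).comp h2).mul h3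
      refine h4.congr' ?_
      have hev : ∀ᶠ h : ℝ in nhdsWithin 0 (Set.Ioi 0),
          h • u ∈ closedBall (0 : EuclideanSpace ℝ (Fin d)) r := by
        apply Eventually.filter_mono nhdsWithin_le_nhds
        have hcont : ContinuousAt (fun h : ℝ => ‖h • u‖) 0 :=
          (continuous_norm.comp (continuous_id.smul continuous_const)).continuousAt
        have h0 : ‖(0 : ℝ) • u‖ < r := by simpa using hr
        filter_upwards [hcont.preimage_mem_nhds (Iio_mem_nhds h0)] with h hh
        rw [mem_closedBall_zero_iff]
        exact le_of_lt hh
      filter_upwards [hev] with h hh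
      simp only [hgdef]
      exact (Set.indicator_of_mem hh (fun z => K (h⁻¹ • (φ z - φ 0)) * f z)).symm
  -- assemble
  have hfinal : (∫ u, K (L u) * f 0) = f 0 * ∫ u, K (L u) := by
    rw [integral_mul_const, mul_comm]
  rw [← hfinal]
  refine Tendsto.congr' ?_ hmain
  filter_upwards [self_mem_nhdsWithin] with h hh
  exact (key h hh).symm
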